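/- Let α = (α_n)_{n∈ℤ} be a sequence of complex numbers with ∑_{n∈ℤ} |α_n|⁶ < ∞ and ∑_{n∈ℤ} |α_{n+2} − 2α_{n+1} + α_n|² < ∞. Then ∑_{n∈ℤ} |α_{n+1} − α_n|³ < ∞ and ‖(S−1)α‖₃² ≤ 2 ‖(S−1)²α‖₂ ‖α‖₆, i.e. (∑_{n∈ℤ} |α_{n+1} − α_n|³)^{2/3} ≤ 2 (∑_{n∈ℤ} |α_{n+2} − 2α_{n+1} + α_n|²)^{1/2} (∑_{n∈ℤ} |α_n|⁶)^{1/6}. -/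

import Mathlib

open scoped BigOperators
open Finset Filter



private lemma sum_Icc_succ_top' {M : Type*} [AddCommMonoid M] (f : ℤ → M) (a b : ℤ) (h : a ≤ b + 1) :
    ∑ n ∈ Finset.Icc a (b+1), f n = (∑ n ∈ Finset.Icc a b, f n) + f (b+1) := by
  have : Finset.Icc a (b+1) = insert (b+1) (Finset.Icc a b) := by
    ext x; simp only [Finset.mem_Icc, Finset.mem_insert]; omega
  rw [this, Finset.sum_insert (by simp), add_comm]

private lemma sum_Icc_top' {M : Type*} [AddCommMonoid M] (f : ℤ → M) (a b : ℤ) (h : a ≤ b) :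
    ∑ n ∈ Finset.Icc a b, f n = (∑ n ∈ Finset.Icc a (b-1), f n) + f b := by
  have := sum_Icc_succ_top' f a (b-1) (by omega)
  rwa [sub_add_cancel] at this

private lemma abel_id (αf g : ℤ → ℂ) (M N : ℤ) (h : M ≤ N) :
    ∑ n ∈ Finset.Icc M N, (αf (n+1) - αf n) * g n
      = αf (N+1) * g N - αf M * g M
        - ∑ n ∈ Finset.Icc M (N-1), αf (n+1) * (g (n+1) - g n) := by
  refine Int.le_induction (m := M) (motive := fun N _ => ∑ n ∈ Finset.Icc M N, (αf (n+1) - αf n) * g n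
      = αf (N+1) * g N - αf M * g M
        - ∑ n ∈ Finset.Icc M (N-1), αf (n+1) * (g (n+1) - g n)) ?_ ?_ N h
  · show _ = _
    rw [Finset.Icc_self, Finset.sum_singleton, Finset.Icc_eq_empty (by omega), Finset.sum_empty]
    ring
  · intro N hN ih
    show _ = _
    rw [sum_Icc_succ_top' _ _ _ (by omega), ih, show N + 1 - 1 = N by ring,
      sum_Icc_top' (fun n => αf (n+1) * (g (n+1) - g n)) M N hN]
    ring


private lemma holder3 (s : Finset ℤ) (x y z : ℤ → ℝ) (hx : ∀ n, 0 ≤ x n) (hy : ∀ n, 0 ≤ y n)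
    (hz : ∀ n, 0 ≤ z n) :
    ∑ n ∈ s, x n * y n * z n ≤
      (∑ n ∈ s, x n ^ (6:ℕ)) ^ ((1:ℝ)/6) * (∑ n ∈ s, y n ^ (3:ℕ)) ^ ((1:ℝ)/3)
        * (∑ n ∈ s, z n ^ (2:ℕ)) ^ ((1:ℝ)/2) := by
  have h22 : Real.HolderConjugate 2 2 := by
    constructor <;> norm_num
  have h3 : Real.HolderConjugate 3 (3/2) := by
    constructor <;> norm_num
  have step1 := Real.inner_le_Lp_mul_Lq_of_nonneg s (f := fun n => x n * y n) (g := z) h22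
    (fun i _ => mul_nonneg (hx i) (hy i)) (fun i _ => hz i)
  have step2 := Real.inner_le_Lp_mul_Lq_of_nonneg s (f := fun n => x n ^ (2:ℕ))
    (g := fun n => y n ^ (2:ℕ)) h3 (fun i _ => by positivity) (fun i _ => by positivity)
  -- rewrite rpow powers as nat powers
  have e1 : ∀ n : ℤ, (x n * y n) ^ (2:ℝ) = x n ^ (2:ℕ) * y n ^ (2:ℕ) := by
    intro n
    rw [show ((2:ℝ)) = ((2:ℕ):ℝ) by norm_num, Real.rpow_natCast]
    ring
  have e2 : ∀ n : ℤ, (z n) ^ (2:ℝ) = z n ^ (2:ℕ) := by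
    intro n; rw [show ((2:ℝ)) = ((2:ℕ):ℝ) by norm_num, Real.rpow_natCast]
  have e3 : ∀ n : ℤ, ((x n ^ (2:ℕ)) : ℝ) ^ (3:ℝ) = x n ^ (6:ℕ) := by
    intro n
    rw [show ((3:ℝ)) = ((3:ℕ):ℝ) by norm_num, Real.rpow_natCast]
    ring
  have e4 : ∀ n : ℤ, ((y n ^ (2:ℕ)) : ℝ) ^ ((3:ℝ)/2) = y n ^ (3:ℕ) := by
    intro n
    rw [← Real.rpow_natCast (y n) 2, ← Real.rpow_mul (hy n), ← Real.rpow_natCast (y n) 3]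
    norm_num
  simp only [e1, e2, e3, e4] at step1 step2
  have hzs : (0:ℝ) ≤ (∑ n ∈ s, z n ^ (2:ℕ)) ^ ((1:ℝ)/2) := by positivity
  have step2' : (∑ n ∈ s, x n ^ (2:ℕ) * y n ^ (2:ℕ)) ^ ((1:ℝ)/2)
      ≤ ((∑ n ∈ s, x n ^ (6:ℕ)) ^ ((1:ℝ)/3) * (∑ n ∈ s, y n ^ (3:ℕ)) ^ ((1:ℝ)/(3/2))) ^ ((1:ℝ)/2) := by
    apply Real.rpow_le_rpow (by positivity) step2 (by norm_num)
  calc ∑ n ∈ s, x n * y n * z n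
      ≤ (∑ n ∈ s, x n ^ (2:ℕ) * y n ^ (2:ℕ)) ^ ((1:ℝ)/2) * (∑ n ∈ s, z n ^ (2:ℕ)) ^ ((1:ℝ)/2) := step1
    _ ≤ ((∑ n ∈ s, x n ^ (6:ℕ)) ^ ((1:ℝ)/3) * (∑ n ∈ s, y n ^ (3:ℕ)) ^ ((1:ℝ)/(3/2))) ^ ((1:ℝ)/2)
          * (∑ n ∈ s, z n ^ (2:ℕ)) ^ ((1:ℝ)/2) := by
        exact mul_le_mul_of_nonneg_right step2' hzs
    _ = (∑ n ∈ s, x n ^ (6:ℕ)) ^ ((1:ℝ)/6) * (∑ n ∈ s, y n ^ (3:ℕ)) ^ ((1:ℝ)/3)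
          * (∑ n ∈ s, z n ^ (2:ℕ)) ^ ((1:ℝ)/2) := by
        rw [Real.mul_rpow (by positivity) (Real.rpow_nonneg (Finset.sum_nonneg fun i _ => pow_nonneg (hy i) _) _),
          ← Real.rpow_mul (by positivity),
          ← Real.rpow_mul (Finset.sum_nonneg fun i _ => pow_nonneg (hy i) _)]
        norm_num


private noncomputable def bb (α : ℤ → ℂ) (n : ℤ) : ℂ := α (n+1) - α n
private noncomputable def gg (α : ℤ → ℂ) (n : ℤ) : ℂ := (‖bb α n‖ : ℂ) * (starRingEnd ℂ) (bb α n)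

private lemma bb_mul_gg (α : ℤ → ℂ) (n : ℤ) :
    bb α n * gg α n = ((‖bb α n‖ ^ (3:ℕ) : ℝ) : ℂ) := by
  have : bb α n * gg α n = (‖bb α n‖ : ℂ) * (bb α n * (starRingEnd ℂ) (bb α n)) := by
    rw [gg]; ring
  rw [this, Complex.mul_conj]
  rw [Complex.normSq_eq_norm_sq]
  push_cast
  ring

private lemma gg_norm (α : ℤ → ℂ) (n : ℤ) : ‖gg α n‖ = ‖bb α n‖ ^ (2:ℕ) := by
  rw [gg, norm_mul, Complex.norm_real, norm_norm, RCLike.norm_conj]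
  ring

private lemma gg_diff (α : ℤ → ℂ) (n : ℤ) :
    ‖gg α (n+1) - gg α n‖ ≤ (‖bb α (n+1)‖ + ‖bb α n‖) * ‖bb α (n+1) - bb α n‖ := by
  have hid : gg α (n+1) - gg α n
      = (‖bb α (n+1)‖ : ℂ) * ((starRingEnd ℂ) (bb α (n+1)) - (starRingEnd ℂ) (bb α n))
        + ((‖bb α (n+1)‖ : ℂ) - (‖bb α n‖ : ℂ)) * (starRingEnd ℂ) (bb α n) := by
    rw [gg, gg]; ring
  rw [hid]
  refine le_trans (norm_add_le _ _) ?_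
  rw [norm_mul, norm_mul, Complex.norm_real, norm_norm, ← map_sub, RCLike.norm_conj,
    RCLike.norm_conj]
  have h1 : ‖((‖bb α (n+1)‖ : ℂ) - (‖bb α n‖ : ℂ))‖ ≤ ‖bb α (n+1) - bb α n‖ := by
    rw [← Complex.ofReal_sub, Complex.norm_real]
    exact abs_norm_sub_norm_le _ _
  have h2 : ‖((‖bb α (n+1)‖ : ℂ) - (‖bb α n‖ : ℂ))‖ * ‖bb α n‖
      ≤ ‖bb α (n+1) - bb α n‖ * ‖bb α n‖ := mul_le_mul_of_nonneg_right h1 (norm_nonneg _)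
  nlinarith [norm_nonneg (bb α (n+1) - bb α n), norm_nonneg (bb α n), norm_nonneg (bb α (n+1))]

private lemma cc_diff (α : ℤ → ℂ) (n : ℤ) :
    bb α (n+1) - bb α n = α (n+2) - 2 * α (n+1) + α n := by
  simp only [bb, show n+1+1 = n+2 by ring]; ring

private lemma key (α : ℤ → ℂ)
    (h6 : Summable fun n : ℤ => ‖α n‖ ^ (6 : ℕ))
    (h2 : Summable fun n : ℤ => ‖α (n + 2) - 2 * α (n + 1) + α n‖ ^ (2 : ℕ))
    (M N : ℤ) (h : M ≤ N) :
    ∑ n ∈ Finset.Icc M N, ‖bb α n‖ ^ (3:ℕ) ≤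
      ‖α (N+1)‖ * ‖bb α N‖ ^ (2:ℕ) + ‖α M‖ * ‖bb α M‖ ^ (2:ℕ)
      + 2 * (∑' n : ℤ, ‖α n‖ ^ (6:ℕ)) ^ ((1:ℝ)/6)
          * (∑' n : ℤ, ‖α (n + 2) - 2 * α (n + 1) + α n‖ ^ (2 : ℕ)) ^ ((1:ℝ)/2)
          * (∑ n ∈ Finset.Icc M N, ‖bb α n‖ ^ (3:ℕ)) ^ ((1:ℝ)/3) := by
  set S : ℝ := ∑ n ∈ Finset.Icc M N, ‖bb α n‖ ^ (3:ℕ) with hS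
  set s' : Finset ℤ := Finset.Icc M (N-1) with hs'
  have hSnn : 0 ≤ S := Finset.sum_nonneg fun i _ => by positivity
  -- step 1 : S as norm of complex sum, Abel
  have hcast : ((S : ℝ) : ℂ) = ∑ n ∈ Finset.Icc M N, (α (n+1) - α n) * gg α n := by
    rw [hS]
    push_cast
    refine Finset.sum_congr rfl fun n _ => ?_
    rw [show (α (n+1) - α n) = bb α n from rfl, bb_mul_gg]
    push_cast
    ring
  have habel := abel_id α (gg α) M N h
  have hnorm1 : S ≤ ‖α (N+1)‖ * ‖bb α N‖ ^ (2:ℕ) + ‖α M‖ * ‖bb α M‖ ^ (2:ℕ)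
      + ∑ n ∈ s', ‖α (n+1)‖ * ‖gg α (n+1) - gg α n‖ := by
    have : S = ‖((S:ℝ):ℂ)‖ := by rw [Complex.norm_real, Real.norm_eq_abs, abs_of_nonneg hSnn]
    rw [this, hcast, habel]
    refine le_trans (norm_sub_le _ _) ?_
    gcongr ?_ + ?_
    · refine le_trans (norm_sub_le _ _) ?_
      rw [norm_mul, norm_mul, gg_norm, gg_norm]
    · refine le_trans (norm_sum_le _ _) ?_
      refine le_of_eq (Finset.sum_congr rfl fun n _ => ?_)
      rw [norm_mul]
  -- step 2 : bound the sum term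
  have hsum2 : ∑ n ∈ s', ‖α (n+1)‖ * ‖gg α (n+1) - gg α n‖
      ≤ ∑ n ∈ s', ‖α (n+1)‖ * ‖bb α (n+1)‖ * ‖α (n + 2) - 2 * α (n + 1) + α n‖
        + ∑ n ∈ s', ‖α (n+1)‖ * ‖bb α n‖ * ‖α (n + 2) - 2 * α (n + 1) + α n‖ := by
    rw [← Finset.sum_add_distrib]
    refine Finset.sum_le_sum fun n _ => ?_
    have := gg_diff α n
    rw [cc_diff] at this
    calc ‖α (n+1)‖ * ‖gg α (n+1) - gg α n‖
        ≤ ‖α (n+1)‖ * ((‖bb α (n+1)‖ + ‖bb α n‖) * ‖α (n + 2) - 2 * α (n + 1) + α n‖) :=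
          mul_le_mul_of_nonneg_left this (norm_nonneg _)
      _ = ‖α (n+1)‖ * ‖bb α (n+1)‖ * ‖α (n + 2) - 2 * α (n + 1) + α n‖
          + ‖α (n+1)‖ * ‖bb α n‖ * ‖α (n + 2) - 2 * α (n + 1) + α n‖ := by ring
  -- Hölder bounds
  set A : ℝ := (∑' n : ℤ, ‖α n‖ ^ (6:ℕ)) ^ ((1:ℝ)/6) with hA
  set B : ℝ := (∑' n : ℤ, ‖α (n + 2) - 2 * α (n + 1) + α n‖ ^ (2 : ℕ)) ^ ((1:ℝ)/2) with hB
  have hAnn : 0 ≤ A := Real.rpow_nonneg (tsum_nonneg fun i => by positivity) _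
  have hBnn : 0 ≤ B := Real.rpow_nonneg (tsum_nonneg fun i => by positivity) _
  have hxsum : ∑ n ∈ s', ‖α (n+1)‖ ^ (6:ℕ) ≤ ∑' n : ℤ, ‖α n‖ ^ (6:ℕ) := by
    have : ∑ n ∈ s', ‖α (n+1)‖ ^ (6:ℕ)
        = ∑ m ∈ s'.map ⟨fun n => n + 1, add_left_injective 1⟩, ‖α m‖ ^ (6:ℕ) := by
      rw [Finset.sum_map]; rfl
    rw [this]
    exact Summable.sum_le_tsum _ (fun i _ => by positivity) h6
  have hzsum : ∑ n ∈ s', ‖α (n + 2) - 2 * α (n + 1) + α n‖ ^ (2:ℕ)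
      ≤ ∑' n : ℤ, ‖α (n + 2) - 2 * α (n + 1) + α n‖ ^ (2 : ℕ) :=
    Summable.sum_le_tsum _ (fun i _ => by positivity) h2
  have hy1 : ∑ n ∈ s', ‖bb α (n+1)‖ ^ (3:ℕ) ≤ S := by
    have : ∑ n ∈ s', ‖bb α (n+1)‖ ^ (3:ℕ)
        = ∑ m ∈ s'.map ⟨fun n => n + 1, add_left_injective 1⟩, ‖bb α m‖ ^ (3:ℕ) := by
      rw [Finset.sum_map]; rfl
    rw [this, hS]
    refine Finset.sum_le_sum_of_subset_of_nonneg ?_ (fun i _ _ => by positivity)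
    intro m hm
    simp only [Finset.mem_map, Finset.mem_Icc, Function.Embedding.coeFn_mk, hs'] at hm ⊢
    omega
  have hy2 : ∑ n ∈ s', ‖bb α n‖ ^ (3:ℕ) ≤ S := by
    rw [hS]
    refine Finset.sum_le_sum_of_subset_of_nonneg ?_ (fun i _ _ => by positivity)
    exact Finset.Icc_subset_Icc_right (by omega)
  have hone : ∀ (y : ℤ → ℝ), (∀ n, 0 ≤ y n) → (∑ n ∈ s', y n ^ (3:ℕ) ≤ S) →
      ∑ n ∈ s', ‖α (n+1)‖ * y n * ‖α (n + 2) - 2 * α (n + 1) + α n‖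
        ≤ A * B * S ^ ((1:ℝ)/3) := by
    intro y hy hyS
    refine le_trans (holder3 s' (fun n => ‖α (n+1)‖) y (fun n => ‖α (n + 2) - 2 * α (n + 1) + α n‖)
      (fun n => norm_nonneg _) hy (fun n => norm_nonneg _)) ?_
    have h1 : (∑ n ∈ s', ‖α (n+1)‖ ^ (6:ℕ)) ^ ((1:ℝ)/6) ≤ A :=
      Real.rpow_le_rpow (Finset.sum_nonneg fun i _ => by positivity) hxsum (by norm_num)
    have h2' : (∑ n ∈ s', y n ^ (3:ℕ)) ^ ((1:ℝ)/3) ≤ S ^ ((1:ℝ)/3) :=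
      Real.rpow_le_rpow (Finset.sum_nonneg fun i _ => pow_nonneg (hy i) _) hyS (by norm_num)
    have h3 : (∑ n ∈ s', ‖α (n + 2) - 2 * α (n + 1) + α n‖ ^ (2:ℕ)) ^ ((1:ℝ)/2) ≤ B :=
      Real.rpow_le_rpow (Finset.sum_nonneg fun i _ => by positivity) hzsum (by norm_num)
    calc (∑ n ∈ s', ‖α (n+1)‖ ^ (6:ℕ)) ^ ((1:ℝ)/6) * (∑ n ∈ s', y n ^ (3:ℕ)) ^ ((1:ℝ)/3)
          * (∑ n ∈ s', ‖α (n + 2) - 2 * α (n + 1) + α n‖ ^ (2:ℕ)) ^ ((1:ℝ)/2)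
        ≤ A * (S ^ ((1:ℝ)/3)) * B :=
          mul_le_mul (mul_le_mul h1 h2' (Real.rpow_nonneg
              (Finset.sum_nonneg fun i _ => pow_nonneg (hy i) _) _) hAnn) h3
            (Real.rpow_nonneg (Finset.sum_nonneg fun i _ => pow_nonneg (norm_nonneg _) _) _) (mul_nonneg hAnn (Real.rpow_nonneg hSnn _))
      _ = A * B * S ^ ((1:ℝ)/3) := by ring
  have hb1 := hone (fun n => ‖bb α (n+1)‖) (fun n => norm_nonneg _) hy1
  have hb2 := hone (fun n => ‖bb α n‖) (fun n => norm_nonneg _) hy2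
  have : S ≤ ‖α (N+1)‖ * ‖bb α N‖ ^ (2:ℕ) + ‖α M‖ * ‖bb α M‖ ^ (2:ℕ)
      + (A * B * S ^ ((1:ℝ)/3) + A * B * S ^ ((1:ℝ)/3)) := by
    refine le_trans hnorm1 ?_
    gcongr
    exact le_trans hsum2 (add_le_add hb1 hb2)
  calc S ≤ ‖α (N+1)‖ * ‖bb α N‖ ^ (2:ℕ) + ‖α M‖ * ‖bb α M‖ ^ (2:ℕ)
      + (A * B * S ^ ((1:ℝ)/3) + A * B * S ^ ((1:ℝ)/3)) := this
    _ = ‖α (N+1)‖ * ‖bb α N‖ ^ (2:ℕ) + ‖α M‖ * ‖bb α M‖ ^ (2:ℕ)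
      + 2 * A * B * S ^ ((1:ℝ)/3) := by ring

-- the quadratic-absorption bound
private lemma absorb {S C D : ℝ} (hS : 0 ≤ S) (hC : 0 ≤ C) (hD : 0 ≤ D)
    (h : S ≤ C + D * S ^ ((1:ℝ)/3)) : S ≤ max 1 ((C + D)^2) := by
  rcases le_or_gt S 1 with h1 | h1
  · exact le_trans h1 (le_max_left _ _)
  · have hSpos : (0:ℝ) < S := lt_trans one_pos h1
    have h13 : S ^ ((1:ℝ)/3) ≤ S ^ ((1:ℝ)/2) :=
      Real.rpow_le_rpow_of_exponent_le h1.le (by norm_num)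
    have hhalf : (1:ℝ) ≤ S ^ ((1:ℝ)/2) := Real.one_le_rpow h1.le (by norm_num)
    have hsq : S ^ ((1:ℝ)/2) * S ^ ((1:ℝ)/2) = S := by
      rw [← Real.rpow_add hSpos]; norm_num
    have h2 : S ≤ (C + D) * S ^ ((1:ℝ)/2) := by
      calc S ≤ C + D * S ^ ((1:ℝ)/3) := h
        _ ≤ C * S ^ ((1:ℝ)/2) + D * S ^ ((1:ℝ)/2) := by
            refine add_le_add (le_mul_of_one_le_right hC hhalf) ?_
            exact mul_le_mul_of_nonneg_left (le_trans h13 le_rfl) hD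
        _ = (C + D) * S ^ ((1:ℝ)/2) := by ring
    have hhp : (0:ℝ) < S ^ ((1:ℝ)/2) := Real.rpow_pos_of_pos hSpos _
    have h3 : S ^ ((1:ℝ)/2) ≤ C + D := by
      refine le_of_mul_le_mul_right ?_ hhp
      rw [hsq]; exact h2
    have : S ≤ (C + D)^2 := by
      rw [← hsq]; nlinarith
    exact le_trans this (le_max_right _ _)

theorem stmt4 (α : ℤ → ℂ)
    (h6 : Summable fun n : ℤ => ‖α n‖ ^ (6 : ℕ))
    (h2 : Summable fun n : ℤ => ‖α (n + 2) - 2 * α (n + 1) + α n‖ ^ (2 : ℕ)) :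
    (Summable fun n : ℤ => ‖α (n + 1) - α n‖ ^ (3 : ℕ)) ∧
      (∑' n : ℤ, ‖α (n + 1) - α n‖ ^ (3 : ℕ)) ^ ((2 : ℝ) / 3) ≤
        2 * (∑' n : ℤ, ‖α (n + 2) - 2 * α (n + 1) + α n‖ ^ (2 : ℕ)) ^ ((1 : ℝ) / 2) *
          (∑' n : ℤ, ‖α n‖ ^ (6 : ℕ)) ^ ((1 : ℝ) / 6) := by
  have hbbeq : (fun n : ℤ => ‖α (n + 1) - α n‖ ^ (3:ℕ)) = fun n : ℤ => ‖bb α n‖ ^ (3:ℕ) := rfl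
  set A : ℝ := (∑' n : ℤ, ‖α n‖ ^ (6:ℕ)) ^ ((1:ℝ)/6) with hA
  set B : ℝ := (∑' n : ℤ, ‖α (n + 2) - 2 * α (n + 1) + α n‖ ^ (2 : ℕ)) ^ ((1:ℝ)/2) with hB
  have hT6nn : 0 ≤ ∑' n : ℤ, ‖α n‖ ^ (6:ℕ) := tsum_nonneg fun i => by positivity
  have hAnn : 0 ≤ A := Real.rpow_nonneg hT6nn _
  have hBnn : 0 ≤ B := Real.rpow_nonneg (tsum_nonneg fun i => by positivity) _
  -- uniform bounds
  have hαle : ∀ k : ℤ, ‖α k‖ ≤ A := by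
    intro k
    have h1 : ‖α k‖ ^ (6:ℕ) ≤ ∑' n : ℤ, ‖α n‖ ^ (6:ℕ) :=
      Summable.le_tsum h6 k fun i _ => by positivity
    have h2' : (‖α k‖ ^ (6:ℕ)) ^ ((1:ℝ)/6) ≤ A :=
      Real.rpow_le_rpow (by positivity) h1 (by norm_num)
    rwa [show ((1:ℝ)/6) = ((6:ℕ) : ℝ)⁻¹ by norm_num,
      Real.pow_rpow_inv_natCast (norm_nonneg _) (by norm_num)] at h2'
  have hble : ∀ k : ℤ, ‖bb α k‖ ≤ 2 * A := by
    intro k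
    calc ‖bb α k‖ ≤ ‖α (k+1)‖ + ‖α k‖ := norm_sub_le _ _
      _ ≤ A + A := add_le_add (hαle _) (hαle _)
      _ = 2 * A := by ring
  have hbd : ∀ k l : ℤ, ‖α k‖ * ‖bb α l‖ ^ (2:ℕ) ≤ 4 * A^3 := by
    intro k l
    calc ‖α k‖ * ‖bb α l‖ ^ (2:ℕ) ≤ A * (2*A)^2 := by
          refine mul_le_mul (hαle _) (pow_le_pow_left₀ (norm_nonneg _) (hble _) 2)
            (by positivity) hAnn
      _ = 4 * A^3 := by ring
  -- summability
  have hsummable : Summable fun n : ℤ => ‖bb α n‖ ^ (3:ℕ) := by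
    refine summable_of_sum_le (fun n => by positivity) (c := max 1 ((8*A^3 + 2*A*B)^2)) ?_
    intro u
    rcases u.eq_empty_or_nonempty with rfl | hu
    · simp only [Finset.sum_empty]
      exact le_trans zero_le_one (le_max_left _ _)
    · set M := u.min' hu
      set N := u.max' hu
      have hMN : M ≤ N := u.min'_le _ (u.max'_mem hu)
      have husub : u ⊆ Finset.Icc M N := fun x hx =>
        Finset.mem_Icc.mpr ⟨u.min'_le x hx, u.le_max' x hx⟩
      have h0 : ∑ n ∈ u, ‖bb α n‖ ^ (3:ℕ) ≤ ∑ n ∈ Finset.Icc M N, ‖bb α n‖ ^ (3:ℕ) :=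
        Finset.sum_le_sum_of_subset_of_nonneg husub fun i _ _ => by positivity
      set S : ℝ := ∑ n ∈ Finset.Icc M N, ‖bb α n‖ ^ (3:ℕ) with hS
      have hSnn : 0 ≤ S := Finset.sum_nonneg fun i _ => by positivity
      have hk := key α h6 h2 M N hMN
      have hk2 : S ≤ 8*A^3 + (2*A*B) * S ^ ((1:ℝ)/3) := by
        refine le_trans hk ?_
        have := hbd (N+1) N
        have := hbd M M
        have hS13 : 0 ≤ S ^ ((1:ℝ)/3) := Real.rpow_nonneg hSnn _
        nlinarith [Real.rpow_nonneg hSnn ((1:ℝ)/3)]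
      have := absorb hSnn (by positivity) (by positivity) hk2
      calc ∑ n ∈ u, ‖bb α n‖ ^ (3:ℕ) ≤ S := h0
        _ ≤ max 1 ((8*A^3 + 2*A*B)^2) := this
  refine ⟨by rw [hbbeq]; exact hsummable, ?_⟩
  -- tendsto facts
  have hα0 : Tendsto (fun n : ℤ => ‖α n‖) cofinite (nhds 0) := by
    have h1 := h6.tendsto_cofinite_zero
    have hc : Tendsto (fun x : ℝ => x ^ (((6:ℕ):ℝ))⁻¹) (nhds 0) (nhds 0) := by
      have := (Real.continuousAt_rpow_const 0 (((6:ℕ):ℝ))⁻¹ (Or.inr (by norm_num)))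
      have h0 : (0:ℝ) ^ (((6:ℕ):ℝ))⁻¹ = 0 := Real.zero_rpow (by norm_num)
      simpa [ContinuousAt, h0] using this
    have := hc.comp h1
    have heq : (fun n : ℤ => (‖α n‖ ^ (6:ℕ)) ^ (((6:ℕ):ℝ))⁻¹) = fun n : ℤ => ‖α n‖ := by
      funext n; exact Real.pow_rpow_inv_natCast (norm_nonneg _) (by norm_num)
    rwa [show ((fun x : ℝ => x ^ (((6:ℕ):ℝ))⁻¹) ∘ (fun n : ℤ => ‖α n‖ ^ (6:ℕ)))
        = fun n : ℤ => ‖α n‖ from heq] at this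
  have hα1 : Tendsto (fun n : ℤ => ‖α (n+1)‖) cofinite (nhds 0) :=
    hα0.comp ((add_left_injective (1:ℤ)).tendsto_cofinite)
  have hb0 : Tendsto (fun n : ℤ => ‖bb α n‖) cofinite (nhds 0) := by
    refine squeeze_zero (fun n => norm_nonneg _) (fun n => norm_sub_le _ _) ?_
    simpa using hα1.add hα0
  have hep : Tendsto (fun n : ℤ => ‖α (n+1)‖ * ‖bb α n‖ ^ (2:ℕ)) cofinite (nhds 0) := by
    have heq : (fun n : ℤ => ‖α (n+1)‖ * ‖bb α n‖ ^ (2:ℕ))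
        = fun n : ℤ => ‖α (n+1)‖ * (‖bb α n‖ * ‖bb α n‖) := by funext n; ring
    rw [heq]; simpa using hα1.mul (hb0.mul hb0)
  have hem : Tendsto (fun n : ℤ => ‖α n‖ * ‖bb α n‖ ^ (2:ℕ)) cofinite (nhds 0) := by
    have heq : (fun n : ℤ => ‖α n‖ * ‖bb α n‖ ^ (2:ℕ))
        = fun n : ℤ => ‖α n‖ * (‖bb α n‖ * ‖bb α n‖) := by funext n; ring
    rw [heq]; simpa using hα0.mul (hb0.mul hb0)
  set T : ℝ := ∑' n : ℤ, ‖α (n + 1) - α n‖ ^ (3:ℕ) with hT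
  have hTnn : 0 ≤ T := tsum_nonneg fun i => by positivity
  have hsummable' : Summable fun n : ℤ => ‖α (n + 1) - α n‖ ^ (3:ℕ) := by
    rw [hbbeq]; exact hsummable
  -- main limit inequality
  have hmain : T ≤ 2 * A * B * T ^ ((1:ℝ)/3) := by
    refine le_of_forall_pos_le_add ?_
    intro ε hε
    rw [hT]
    refine Summable.tsum_le_of_sum_le hsummable' ?_
    intro u
    rcases u.eq_empty_or_nonempty with rfl | hu
    · simp only [Finset.sum_empty]
      have : 0 ≤ 2 * A * B * T ^ ((1:ℝ)/3) := by
        have := Real.rpow_nonneg hTnn ((1:ℝ)/3); positivity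
      linarith
    · -- choose good endpoints
      have hfinp : {n : ℤ | ¬ ‖α (n+1)‖ * ‖bb α n‖ ^ (2:ℕ) < ε/2}.Finite := by
        have : ∀ᶠ n in cofinite, ‖α (n+1)‖ * ‖bb α n‖ ^ (2:ℕ) < ε/2 :=
          hep (Iio_mem_nhds (by positivity))
        exact Filter.eventually_cofinite.mp this
      have hfinm : {n : ℤ | ¬ ‖α n‖ * ‖bb α n‖ ^ (2:ℕ) < ε/2}.Finite := by
        have : ∀ᶠ n in cofinite, ‖α n‖ * ‖bb α n‖ ^ (2:ℕ) < ε/2 :=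
          hem (Iio_mem_nhds (by positivity))
        exact Filter.eventually_cofinite.mp this
      obtain ⟨t, ht⟩ := hfinp.bddAbove
      obtain ⟨t', ht'⟩ := hfinm.bddBelow
      set N : ℤ := max (u.max' hu) t + 1 with hN
      set M : ℤ := min (u.min' hu) t' - 1 with hM
      have hNe : ‖α (N+1)‖ * ‖bb α N‖ ^ (2:ℕ) < ε/2 := by
        by_contra hcon
        have : N ≤ t := ht hcon
        have : t + 1 ≤ N := by rw [hN]; omega
        omega
      have hMe : ‖α M‖ * ‖bb α M‖ ^ (2:ℕ) < ε/2 := by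
        by_contra hcon
        have : t' ≤ M := ht' hcon
        have : M ≤ t' - 1 := by rw [hM]; omega
        omega
      have hMN : M ≤ N := by
        have h1 : M ≤ u.min' hu := by rw [hM]; omega
        have h2' : u.max' hu ≤ N := by rw [hN]; omega
        have := u.min'_le _ (u.max'_mem hu)
        omega
      have husub : u ⊆ Finset.Icc M N := by
        intro x hx
        refine Finset.mem_Icc.mpr ⟨?_, ?_⟩
        · have := u.min'_le x hx; rw [hM]; omega
        · have := u.le_max' x hx; rw [hN]; omega
      have h0 : ∑ n ∈ u, ‖α (n + 1) - α n‖ ^ (3:ℕ)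
          ≤ ∑ n ∈ Finset.Icc M N, ‖bb α n‖ ^ (3:ℕ) := by
        rw [show (∑ n ∈ u, ‖α (n + 1) - α n‖ ^ (3:ℕ)) = ∑ n ∈ u, ‖bb α n‖ ^ (3:ℕ) from rfl]
        exact Finset.sum_le_sum_of_subset_of_nonneg husub fun i _ _ => by positivity
      have hk := key α h6 h2 M N hMN
      have hST : ∑ n ∈ Finset.Icc M N, ‖bb α n‖ ^ (3:ℕ) ≤ T := by
        rw [hT, hbbeq]
        exact Summable.sum_le_tsum _ (fun i _ => by positivity) hsummable
      have hrp : (∑ n ∈ Finset.Icc M N, ‖bb α n‖ ^ (3:ℕ)) ^ ((1:ℝ)/3) ≤ T ^ ((1:ℝ)/3) :=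
        Real.rpow_le_rpow (Finset.sum_nonneg fun i _ => by positivity) hST (by norm_num)
      have h2AB : (0:ℝ) ≤ 2 * A * B := by positivity
      calc ∑ n ∈ u, ‖α (n + 1) - α n‖ ^ (3:ℕ)
          ≤ ∑ n ∈ Finset.Icc M N, ‖bb α n‖ ^ (3:ℕ) := h0
        _ ≤ ‖α (N+1)‖ * ‖bb α N‖ ^ (2:ℕ) + ‖α M‖ * ‖bb α M‖ ^ (2:ℕ)
            + 2 * A * B * (∑ n ∈ Finset.Icc M N, ‖bb α n‖ ^ (3:ℕ)) ^ ((1:ℝ)/3) := hk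
        _ ≤ ε/2 + ε/2 + 2 * A * B * T ^ ((1:ℝ)/3) := by
            refine add_le_add (add_le_add hNe.le hMe.le) ?_
            exact mul_le_mul_of_nonneg_left hrp h2AB
        _ = 2 * A * B * T ^ ((1:ℝ)/3) + ε := by ring
  -- conclude
  rcases eq_or_lt_of_le hTnn with hT0 | hTpos
  · rw [← hT0, Real.zero_rpow (by norm_num)]
    exact mul_nonneg (mul_nonneg (by norm_num) hBnn) hAnn
  · have hsplit : T ^ ((2:ℝ)/3) * T ^ ((1:ℝ)/3) = T := by
      rw [← Real.rpow_add hTpos]; norm_num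
    have h13pos : (0:ℝ) < T ^ ((1:ℝ)/3) := Real.rpow_pos_of_pos hTpos _
    have hfin : T ^ ((2:ℝ)/3) ≤ 2 * A * B := by
      refine le_of_mul_le_mul_right ?_ h13pos
      rw [hsplit]
      exact hmain
    calc T ^ ((2:ℝ)/3) ≤ 2 * A * B := hfin
      _ = 2 * B * A := by ring
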